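/- Let A, B, C be sets and let R ⊆ A × B, S ⊆ B × C, T ⊆ A × C be finite relations. Then the number of triples (a, b, c) ∈ A × B × C with (a, b) ∈ R, (b, c) ∈ S, and (a, c) ∈ T is at most (|R| · |S| · |T|)^{1/2}. -/

import Mathlib

open Finset

/-- For finite relations `R ⊆ A × B`, `S ⊆ B × C`, `T ⊆ A × C`, the number
of triples `(a, b, c)` with `(a, b) ∈ R`, `(b, c) ∈ S`, `(a, c) ∈ T` is at most
`(|R| · |S| · |T|) ^ (1/2)`. -/
theorem stmt5 {A B C : Type*} (R : Set (A × B)) (S : Set (B × C)) (T : Set (A × C))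
    (hR : R.Finite) (hS : S.Finite) (hT : T.Finite) :
    (({x : A × B × C | (x.1, x.2.1) ∈ R ∧ (x.2.1, x.2.2) ∈ S ∧ (x.1, x.2.2) ∈ T}).ncard : ℝ)
      ≤ ((R.ncard : ℝ) * (S.ncard : ℝ) * (T.ncard : ℝ)) ^ ((1 : ℝ) / 2) := by
  classical
  set W : Set (A × B × C) :=
    {x : A × B × C | (x.1, x.2.1) ∈ R ∧ (x.2.1, x.2.2) ∈ S ∧ (x.1, x.2.2) ∈ T} with hWdef
  have hW : W.Finite := by
    apply Set.Finite.subset ((hR.prod hS).image (fun p => (p.1.1, p.1.2, p.2.2)))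
    rintro ⟨a, b, c⟩ ⟨h1, h2, h3⟩
    exact ⟨((a, b), (b, c)), ⟨h1, h2⟩, rfl⟩
  set Rf := hR.toFinset with hRf
  set Sf := hS.toFinset with hSf
  set Tf := hT.toFinset with hTf
  set Wf := hW.toFinset with hWf
  set r : A → ℕ := fun a => (Rf.filter (fun p => p.1 = a)).card with hr
  set s : C → ℕ := fun c => (Sf.filter (fun p => p.2 = c)).card with hs
  set Bf : Finset B := Rf.image Prod.snd with hBf
  set d : A → C → ℕ :=
    fun a c => (Bf.filter (fun b => (a, b) ∈ R ∧ (b, c) ∈ S)).card with hd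
  -- N = sum over Tf of d
  have hNsum : Wf.card = ∑ t ∈ Tf, d t.1 t.2 := by
    rw [card_eq_sum_card_fiberwise (f := fun x : A × B × C => (x.1, x.2.2)) (t := Tf)]
    · refine Finset.sum_congr rfl ?_
      rintro ⟨a, c⟩ hac
      simp only [hTf, Set.Finite.mem_toFinset] at hac
      apply Finset.card_bij (fun x _ => x.2.1)
      · rintro ⟨a', b, c'⟩ hx
        simp only [mem_filter, hWf, Set.Finite.mem_toFinset, hWdef, Set.mem_setOf_eq,
          Prod.mk.injEq] at hx
        obtain ⟨⟨h1, h2, h3⟩, ha, hc⟩ := hx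
        subst ha; subst hc
        simp only [hd, mem_filter, hBf, mem_image, hRf, Set.Finite.mem_toFinset]
        exact ⟨⟨(a', b), h1, rfl⟩, h1, h2⟩
      · rintro ⟨a1, b1, c1⟩ h1 ⟨a2, b2, c2⟩ h2 hb
        simp only [mem_filter, Prod.mk.injEq] at h1 h2
        simp only [Prod.mk.injEq]
        exact ⟨h1.2.1.trans h2.2.1.symm, hb, h1.2.2.trans h2.2.2.symm⟩
      · intro b hb
        simp only [hd, mem_filter, hBf] at hb
        obtain ⟨_, h1, h2⟩ := hb
        refine ⟨(a, b, c), ?_, rfl⟩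
        simp only [mem_filter, hWf, Set.Finite.mem_toFinset, hWdef, Set.mem_setOf_eq]
        exact ⟨⟨h1, h2, hac⟩, trivial⟩
    · intro x hx
      simp only [Finset.mem_coe, hWf, Set.Finite.mem_toFinset, hWdef, Set.mem_setOf_eq] at hx
      simp only [Finset.mem_coe, hTf, Set.Finite.mem_toFinset]
      exact hx.2.2
  -- d ≤ r and d ≤ s
  have hdr : ∀ a c, d a c ≤ r a := by
    intro a c
    apply Finset.card_le_card_of_injOn (fun b => (a, b))
    · intro b hb
      simp only [Finset.mem_coe, hd, mem_filter] at hb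
      simp only [Finset.mem_coe, hr, mem_filter, hRf, Set.Finite.mem_toFinset]
      exact ⟨hb.2.1, trivial⟩
    · intro b1 _ b2 _ h
      exact (Prod.mk.injEq .. ▸ h).2
  have hds : ∀ a c, d a c ≤ s c := by
    intro a c
    apply Finset.card_le_card_of_injOn (fun b => (b, c))
    · intro b hb
      simp only [Finset.mem_coe, hd, mem_filter] at hb
      simp only [Finset.mem_coe, hs, mem_filter, hSf, Set.Finite.mem_toFinset]
      exact ⟨hb.2.2, trivial⟩
    · intro b1 _ b2 _ h
      exact (Prod.mk.injEq .. ▸ h).1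
  -- sums of degrees
  set A' : Finset A := Tf.image Prod.fst ∪ Rf.image Prod.fst with hA'
  set C' : Finset C := Tf.image Prod.snd ∪ Sf.image Prod.snd with hC'
  have hrsum : ∑ a ∈ A', r a = Rf.card := by
    rw [card_eq_sum_card_fiberwise (f := Prod.fst) (t := A')]
    intro p hp
    simp only [Finset.mem_coe, hA', mem_union, mem_image]
    exact Or.inr ⟨p, hp, rfl⟩
  have hssum : ∑ c ∈ C', s c = Sf.card := by
    rw [card_eq_sum_card_fiberwise (f := Prod.snd) (t := C')]
    intro p hp
    simp only [Finset.mem_coe, hC', mem_union, mem_image]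
    exact Or.inr ⟨p, hp, rfl⟩
  have hTsub : Tf ⊆ A' ×ˢ C' := by
    rintro ⟨a, c⟩ h
    simp only [mem_product, hA', hC', mem_union, mem_image]
    exact ⟨Or.inl ⟨(a, c), h, rfl⟩, Or.inl ⟨(a, c), h, rfl⟩⟩
  -- key inequality in ℕ
  have key : Wf.card ^ 2 ≤ Tf.card * (Rf.card * Sf.card) := by
    calc Wf.card ^ 2 = (∑ t ∈ Tf, 1 * d t.1 t.2) ^ 2 := by rw [hNsum]; simp
      _ ≤ (∑ _t ∈ Tf, (1 : ℕ) ^ 2) * ∑ t ∈ Tf, d t.1 t.2 ^ 2 :=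
          Finset.sum_mul_sq_le_sq_mul_sq _ _ _
      _ = Tf.card * ∑ t ∈ Tf, d t.1 t.2 ^ 2 := by simp
      _ ≤ Tf.card * ∑ t ∈ Tf, r t.1 * s t.2 := by
          refine Nat.mul_le_mul_left _ (Finset.sum_le_sum ?_)
          intro t _
          rw [sq]
          exact Nat.mul_le_mul (hdr t.1 t.2) (hds t.1 t.2)
      _ ≤ Tf.card * ∑ t ∈ A' ×ˢ C', r t.1 * s t.2 := by
          exact Nat.mul_le_mul_left _ (Finset.sum_le_sum_of_subset hTsub)
      _ = Tf.card * (Rf.card * Sf.card) := by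
          rw [Finset.sum_product, ← hrsum, ← hssum, ← Finset.sum_mul_sum]
  -- convert to ℝ
  have hWc : W.ncard = Wf.card := Set.ncard_eq_toFinset_card W hW
  have hRc : R.ncard = Rf.card := Set.ncard_eq_toFinset_card R hR
  have hSc : S.ncard = Sf.card := Set.ncard_eq_toFinset_card S hS
  have hTc : T.ncard = Tf.card := Set.ncard_eq_toFinset_card T hT
  rw [hWc, hRc, hSc, hTc, ← Real.sqrt_eq_rpow]
  rw [Real.le_sqrt (by positivity) (by positivity)]
  have : (Wf.card : ℝ) ^ 2 ≤ (Tf.card : ℝ) * ((Rf.card : ℝ) * (Sf.card : ℝ)) := by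
    exact_mod_cast key
  linarith
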